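/- Let c₁, c₂ be integers with gcd(c₁, c₂) = 1, and define f : ℤ → ℤ by f(n) = c₁n + c₂·n(n−1)/2. Then the following are equivalent: (i) c₂ ≢ 2 (mod 4); (ii) for every j ≥ 1 and every residue a modulo 2^j, lim_{N→∞} #{n ∈ ℤ : −N ≤ n ≤ N, f(n) ≡ a (mod 2^j)} / (2N+1) = 2^{−j}, i.e. the values f(n) are uniformly distributed modulo every power of 2. -/

import Mathlib

open Finset

private lemma odd_coprime_pow {t : ℤ} (ht : t % 2 = 1) (s : ℕ) : IsCoprime ((2:ℤ)^s) t := by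
  have h2 : IsCoprime (2:ℤ) t := ⟨-(t/2), 1, by omega⟩
  exact h2.pow_left

private lemma c1_odd {c₁ c₂ : ℤ} (h : Int.gcd c₁ c₂ = 1) (hc2 : c₂ % 2 = 0) : c₁ % 2 = 1 := by
  rcases Int.emod_two_eq_zero_or_one c₁ with h1 | h1
  · exfalso
    have h2 : (2:ℤ) ∣ (Int.gcd c₁ c₂ : ℤ) := Int.dvd_coe_gcd ⟨c₁/2, by omega⟩ ⟨c₂/2, by omega⟩
    rw [h] at h2
    norm_num at h2
  · exact h1

private lemma mem_iff (c₁ c₂ a : ℤ) (j : ℕ) (n : ℤ) :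
    (c₁*n + c₂*(n*(n-1)/2) ≡ a [ZMOD 2^j]) ↔
      (2*(c₁*n) + c₂*(n*(n-1)) ≡ 2*a [ZMOD 2^(j+1)]) := by
  have heven : Even (n*(n-1)) := by
    have h := Int.even_mul_succ_self (n-1)
    rw [sub_add_cancel] at h
    rwa [mul_comm] at h
  have h2 : (2:ℤ) * (n*(n-1)/2) = n*(n-1) := Int.two_mul_ediv_two_of_even heven
  rw [Int.modEq_iff_dvd, Int.modEq_iff_dvd, pow_succ, mul_comm ((2:ℤ)^j) 2]
  have key : 2*a - (2*(c₁*n) + c₂*(n*(n-1))) = 2*(a - (c₁*n + c₂*(n*(n-1)/2))) := by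
    linear_combination c₂ * h2
  rw [key, mul_dvd_mul_iff_left (by norm_num : (2:ℤ) ≠ 0)]

private lemma G_modEq {c₁ c₂ P r s : ℤ} (hrs : r ≡ s [ZMOD P]) :
    2*(c₁*r) + c₂*(r*(r-1)) ≡ 2*(c₁*s) + c₂*(s*(s-1)) [ZMOD P] := by
  rw [Int.modEq_iff_dvd] at hrs ⊢
  obtain ⟨k, hk⟩ := hrs
  exact ⟨k*(2*c₁ + c₂*(s + r - 1)), by linear_combination (2*c₁ + c₂*(s + r - 1)) * hk⟩

private lemma evencase (c₁ d a' m : ℤ) (hc₁ : c₁ % 2 = 1) (hd : d % 2 = 0) (hm : 0 < m)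
    (hcop : ∀ t : ℤ, t % 2 = 1 → IsCoprime m t) :
    ((Finset.Ico (0:ℤ) (2*m)).filter (fun r => m ∣ (c₁*r + d*(r*(r-1)) - a'))).card = 2 := by
  -- injectivity of H mod m
  have hinj : ∀ x y : ℤ, m ∣ ((c₁*x + d*(x*(x-1))) - (c₁*y + d*(y*(y-1)))) → m ∣ (x - y) := by
    intro x y hxy
    have hfac : (c₁*x + d*(x*(x-1))) - (c₁*y + d*(y*(y-1)))
        = (x - y) * (c₁ + d*(x + y - 1)) := by ring
    rw [hfac] at hxy
    have ht : (c₁ + d*(x + y - 1)) % 2 = 1 := by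
      obtain ⟨k, hk⟩ : (2:ℤ) ∣ d*(x+y-1) := dvd_mul_of_dvd_left ⟨d/2, by omega⟩ _
      omega
    exact ((hcop _ ht).dvd_of_dvd_mul_right hxy)
  -- surjectivity of H mod m on [0, m)
  have himg : (Finset.Ico (0:ℤ) m).image (fun r => (c₁*r + d*(r*(r-1))) % m)
      = Finset.Ico (0:ℤ) m := by
    apply Finset.eq_of_subset_of_card_le
    · intro t ht
      simp only [Finset.mem_image, Finset.mem_Ico] at ht ⊢
      obtain ⟨r, _, rfl⟩ := ht
      exact ⟨Int.emod_nonneg _ hm.ne', Int.emod_lt_of_pos _ hm⟩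
    · rw [Finset.card_image_of_injOn]
      intro x hx y hy hxy
      simp only [Finset.coe_Ico, Set.mem_Ico] at hx hy
      have hdvd : m ∣ ((c₁*x + d*(x*(x-1))) - (c₁*y + d*(y*(y-1)))) :=
        Int.ModEq.dvd (Int.ModEq.symm hxy)
      have := hinj x y hdvd
      have hz : x - y = 0 := Int.eq_zero_of_abs_lt_dvd this (by rw [abs_lt]; omega)
      omega
  have ha'm : a' % m ∈ Finset.Ico (0:ℤ) m := by
    simp only [Finset.mem_Ico]
    exact ⟨Int.emod_nonneg _ hm.ne', Int.emod_lt_of_pos _ hm⟩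
  rw [← himg] at ha'm
  obtain ⟨r₀, hr₀mem, hr₀⟩ := Finset.mem_image.mp ha'm
  simp only [Finset.mem_Ico] at hr₀mem
  have hsol : m ∣ (c₁*r₀ + d*(r₀*(r₀-1)) - a') := by
    have : (c₁*r₀ + d*(r₀*(r₀-1))) ≡ a' [ZMOD m] := by
      show _ % m = _ % m
      rw [hr₀]
    exact dvd_sub_comm.mp this.dvd
  have hS : (Finset.Ico (0:ℤ) (2*m)).filter (fun r => m ∣ (c₁*r + d*(r*(r-1)) - a'))
      = {r₀, r₀ + m} := by
    ext r
    simp only [Finset.mem_filter, Finset.mem_Ico, Finset.mem_insert, Finset.mem_singleton]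
    constructor
    · rintro ⟨⟨hr0, hrP⟩, hcond⟩
      have h2 : m ∣ ((c₁*r + d*(r*(r-1))) - (c₁*r₀ + d*(r₀*(r₀-1)))) := by
        have := dvd_sub hcond hsol
        simpa using this
      obtain ⟨k, hk⟩ := hinj _ _ h2
      have hk0 : 0 ≤ k := by nlinarith
      have hk1 : k ≤ 1 := by nlinarith
      interval_cases k
      · left; omega
      · right; omega
    · rintro (rfl | rfl)
      · exact ⟨⟨hr₀mem.1, by omega⟩, hsol⟩
      · refine ⟨⟨by omega, by omega⟩, ?_⟩
        have hdiff : (c₁*(r₀+m) + d*((r₀+m)*((r₀+m)-1)) - a')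
            = (c₁*r₀ + d*(r₀*(r₀-1)) - a') + m * (c₁ + d*(2*r₀ + m - 1)) := by ring
        rw [hdiff]
        exact dvd_add hsol (Dvd.intro _ rfl)
  rw [hS]
  rw [Finset.card_insert_of_notMem (by simp; omega), Finset.card_singleton]

private lemma oddcase (c₁ c₂ b m : ℤ) (hc₂ : c₂ % 2 = 1) (hb : b % 2 = 0) (hm : 0 < m)
    (hcop : ∀ t : ℤ, t % 2 = 1 → IsCoprime (2*m) t) :
    ((Finset.Ico (0:ℤ) (2*m)).filter
      (fun r => 2*m ∣ (2*(c₁*r) + c₂*(r*(r-1)) - b))).card = 2 := by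
  set P : ℤ := 2*m with hPdef
  have hP : 0 < P := by positivity
  have hP2 : (2:ℤ) ∣ P := ⟨m, rfl⟩
  set G : ℤ → ℤ := fun r => 2*(c₁*r) + c₂*(r*(r-1)) with hGdef
  set w : ℤ := 2*c₁ - c₂ with hwdef
  have hw : w % 2 = 1 := by omega
  -- inverse of c₂ mod P
  obtain ⟨u, v, huv⟩ := hcop c₂ hc₂
  have hu : P ∣ c₂ * v - 1 := ⟨-u, by linear_combination huv⟩
  have hvodd : v % 2 = 1 := by
    rcases Int.emod_two_eq_zero_or_one v with h0 | h1
    · exfalso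
      obtain ⟨s, hs⟩ : (2:ℤ) ∣ v * c₂ := dvd_mul_of_dvd_left ⟨v/2, by omega⟩ _
      obtain ⟨t2, ht2⟩ : (2:ℤ) ∣ u * P := dvd_mul_of_dvd_right hP2 u
      have h1 : u * P + v * c₂ = 2*t2 + 2*s := by rw [hs, ht2]
      rw [huv] at h1
      omega
    · exact h1
  -- G is even
  have hGeven : ∀ r : ℤ, (2:ℤ) ∣ G r := by
    intro r
    have heven : Even (r*(r-1)) := by
      have h := Int.even_mul_succ_self (r-1)
      rw [sub_add_cancel] at h
      rwa [mul_comm] at h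
    obtain ⟨k, hk⟩ := heven
    exact ⟨c₁*r + c₂*k, by rw [hGdef]; linear_combination c₂ * hk⟩
  -- fiber structure
  have hfib : ∀ x, 0 ≤ x → x < P → ∀ y, 0 ≤ y → y < P →
      (G x ≡ G y [ZMOD P]) → y = x ∨ y = (-x - v*w) % P := by
    intro x hx0 hxP y hy0 hyP hGxy
    have hdvd : P ∣ (x - y) * (c₂*(x+y) + w) := by
      obtain ⟨k, hk⟩ := (Int.modEq_iff_dvd.mp hGxy)
      exact ⟨-k, by rw [hGdef, hwdef] at *; linear_combination -hk⟩
    rcases Int.emod_two_eq_zero_or_one (x - y) with hpar | hpar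
    · -- x - y even, so the second factor is odd
      have ht : (c₂*(x+y) + w) % 2 = 1 := by
        obtain ⟨k, hk⟩ : (2:ℤ) ∣ c₂*(x+y) := dvd_mul_of_dvd_right ⟨(x+y)/2, by omega⟩ _
        omega
      have := (hcop _ ht).dvd_of_dvd_mul_right hdvd
      have hz : x - y = 0 := Int.eq_zero_of_abs_lt_dvd this (by rw [abs_lt]; omega)
      left; omega
    · -- x - y odd
      have hco := hcop _ hpar
      have hPt : P ∣ (c₂*(x+y) + w) := hco.dvd_of_dvd_mul_left hdvd
      obtain ⟨k, hk⟩ := hPt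
      obtain ⟨l, hl⟩ := hu
      have hdvd2 : P ∣ (x + y + v*w) :=
        ⟨v*k - (x+y)*l, by linear_combination v * hk - (x+y) * hl⟩
      right
      obtain ⟨q, hq⟩ := hdvd2
      have hme : (-x - v*w) % P = y % P :=
        (Int.modEq_iff_dvd.mpr ⟨q, by linear_combination hq⟩ :
          (-x - v*w) ≡ y [ZMOD P])
      rw [Int.emod_eq_of_lt hy0 hyP] at hme
      exact hme.symm
  -- image of G mod P on [0,P) is exactly the even residues
  have hdecomp : ∀ r : ℤ, ∀ t : ℤ, (2:ℤ) ∣ t → (2:ℤ) ∣ t % P := by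
    intro r t h2t
    obtain ⟨k, hk⟩ := h2t
    have := Int.emod_emod_of_dvd t hP2
    omega
  have hfibcard : ∀ t ∈ (Finset.Ico (0:ℤ) P).image (fun r => G r % P),
      ((Finset.Ico (0:ℤ) P).filter (fun r => G r % P = t)).card ≤ 2 := by
    intro t ht
    obtain ⟨x, hxmem, hxt⟩ := Finset.mem_image.mp ht
    simp only [Finset.mem_Ico] at hxmem
    have hsub : (Finset.Ico (0:ℤ) P).filter (fun r => G r % P = t)
        ⊆ {x, (-x - v*w) % P} := by
      intro y hy
      simp only [Finset.mem_filter, Finset.mem_Ico] at hy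
      obtain ⟨⟨hy0, hyP⟩, hyt⟩ := hy
      have : G x ≡ G y [ZMOD P] := by
        show G x % P = G y % P
        rw [hxt, hyt]
      rcases hfib x hxmem.1 hxmem.2 y hy0 hyP this with h | h
      · simp [h]
      · simp [h]
    calc ((Finset.Ico (0:ℤ) P).filter (fun r => G r % P = t)).card
        ≤ ({x, (-x - v*w) % P} : Finset ℤ).card := Finset.card_le_card hsub
      _ ≤ 2 := (Finset.card_insert_le _ _).trans (by simp)
  have hcardIco : (Finset.Ico (0:ℤ) P).card = P.toNat := by
    rw [Int.card_Ico]; simp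
  have himgle : P.toNat ≤ 2 * ((Finset.Ico (0:ℤ) P).image (fun r => G r % P)).card := by
    rw [← hcardIco]
    exact Finset.card_le_mul_card_image _ 2 hfibcard
  have hevens : ((Finset.Ico (0:ℤ) m).image (fun e => 2*e)).card = m.toNat := by
    rw [Finset.card_image_of_injOn (fun x _ y _ hxy => by omega), Int.card_Ico]; simp
  have himgsub : (Finset.Ico (0:ℤ) P).image (fun r => G r % P)
      ⊆ (Finset.Ico (0:ℤ) m).image (fun e => 2*e) := by
    intro t ht
    obtain ⟨r, hrmem, hrt⟩ := Finset.mem_image.mp ht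
    have ht2 : (2:ℤ) ∣ t := hrt ▸ hdecomp r (G r) (hGeven r)
    have ht0 : 0 ≤ t := hrt ▸ Int.emod_nonneg _ hP.ne'
    have htP : t < P := hrt ▸ Int.emod_lt_of_pos _ hP
    refine Finset.mem_image.mpr ⟨t/2, ?_, by omega⟩
    simp only [Finset.mem_Ico]
    omega
  have himg : (Finset.Ico (0:ℤ) P).image (fun r => G r % P)
      = (Finset.Ico (0:ℤ) m).image (fun e => 2*e) := by
    apply Finset.eq_of_subset_of_card_le himgsub
    rw [hevens]
    omega
  -- b % P is in the image
  have hbmem : b % P ∈ (Finset.Ico (0:ℤ) P).image (fun r => G r % P) := by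
    rw [himg]
    have hb2 : (2:ℤ) ∣ b % P := hdecomp 0 b ⟨b/2, by omega⟩
    have hb0 : 0 ≤ b % P := Int.emod_nonneg _ hP.ne'
    have hbP : b % P < P := Int.emod_lt_of_pos _ hP
    refine Finset.mem_image.mpr ⟨(b % P)/2, ?_, by omega⟩
    simp only [Finset.mem_Ico]
    omega
  obtain ⟨r₁, hr₁mem, hr₁⟩ := Finset.mem_image.mp hbmem
  simp only [Finset.mem_Ico] at hr₁mem
  have hr₁b : G r₁ ≡ b [ZMOD P] := by
    show G r₁ % P = b % P
    exact hr₁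
  -- the partner solution
  set r₂ : ℤ := (-r₁ - v*w) % P with hr₂def
  have hr₂mem : 0 ≤ r₂ ∧ r₂ < P := ⟨Int.emod_nonneg _ hP.ne', Int.emod_lt_of_pos _ hP⟩
  have hr₂mod : P ∣ (r₂ + r₁ + v*w) := by
    obtain ⟨q, hq⟩ := Int.dvd_self_sub_of_emod_eq hr₂def.symm
    exact ⟨-q, by linear_combination -hq⟩
  have hr₂b : G r₂ ≡ b [ZMOD P] := by
    obtain ⟨k, hk⟩ := hr₂mod
    obtain ⟨l, hl⟩ := hu
    have hfac : P ∣ (c₂*(r₁+r₂) + w) :=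
      ⟨c₂*k - w*l, by linear_combination c₂ * hk - w * hl⟩
    obtain ⟨q, hq⟩ := hfac
    have : G r₂ ≡ G r₁ [ZMOD P] := by
      rw [Int.modEq_iff_dvd]
      exact ⟨(r₁ - r₂)*q, by rw [hGdef, hwdef] at *; linear_combination (r₁ - r₂) * hq⟩
    exact this.trans hr₁b
  have hr₂ne : r₁ ≠ r₂ := by
    intro heq
    obtain ⟨k, hk⟩ := hr₂mod
    rw [← heq] at hk
    have hvw : (v*w) % 2 = 1 := by
      have := Int.mul_emod v w 2
      rw [hvodd, hw] at this
      omega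
    obtain ⟨mm, hmm⟩ : (2:ℤ) ∣ P * k := dvd_mul_of_dvd_left hP2 k
    omega
  -- the solution set is exactly {r₁, r₂}
  have hS : (Finset.Ico (0:ℤ) P).filter (fun r => P ∣ (G r - b)) = {r₁, r₂} := by
    ext r
    simp only [Finset.mem_filter, Finset.mem_Ico, Finset.mem_insert, Finset.mem_singleton]
    constructor
    · rintro ⟨⟨hr0, hrP⟩, hcond⟩
      have hGr : G r₁ ≡ G r [ZMOD P] := by
        have h1 : G r ≡ b [ZMOD P] := Int.modEq_iff_dvd.mpr (by
          obtain ⟨k, hk⟩ := hcond; exact ⟨-k, by linear_combination -hk⟩)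
        exact hr₁b.trans h1.symm
      rcases hfib r₁ hr₁mem.1 hr₁mem.2 r hr0 hrP hGr with h | h
      · left; exact h
      · right; exact h
    · rintro (rfl | rfl)
      · refine ⟨⟨hr₁mem.1, hr₁mem.2⟩, ?_⟩
        obtain ⟨k, hk⟩ := Int.modEq_iff_dvd.mp hr₁b
        exact ⟨-k, by linear_combination -hk⟩
      · refine ⟨⟨hr₂mem.1, hr₂mem.2⟩, ?_⟩
        obtain ⟨k, hk⟩ := Int.modEq_iff_dvd.mp hr₂b
        exact ⟨-k, by linear_combination -hk⟩
  rw [hS, Finset.card_insert_of_notMem (by simpa using hr₂ne), Finset.card_singleton]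

private lemma card_two (c₁ c₂ : ℤ) (h : Int.gcd c₁ c₂ = 1) (hc₂ : ¬ c₂ ≡ 2 [ZMOD 4])
    (j : ℕ) (b : ℤ) (hb : b % 2 = 0) :
    ((Finset.Ico (0:ℤ) (2^(j+1))).filter
      (fun r => 2*(c₁*r) + c₂*(r*(r-1)) ≡ b [ZMOD 2^(j+1)])).card = 2 := by
  have hPm : (2:ℤ)^(j+1) = 2 * 2^j := by rw [pow_succ]; ring
  have hm : (0:ℤ) < 2^j := by positivity
  have hcop : ∀ t : ℤ, t % 2 = 1 → IsCoprime ((2:ℤ)^j) t := fun t ht => odd_coprime_pow ht j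
  have hcopP : ∀ t : ℤ, t % 2 = 1 → IsCoprime (2 * (2:ℤ)^j) t := by
    intro t ht; rw [← hPm]; exact odd_coprime_pow ht (j+1)
  rcases Int.emod_two_eq_zero_or_one c₂ with he | ho
  · -- c₂ even, hence ≡ 0 mod 4
    rw [Int.modEq_iff_dvd] at hc₂
    have hd2 : (c₂/2) % 2 = 0 := by omega
    have hc₁ : c₁ % 2 = 1 := c1_odd h he
    have hfil : (Finset.Ico (0:ℤ) (2^(j+1))).filter
        (fun r => 2*(c₁*r) + c₂*(r*(r-1)) ≡ b [ZMOD 2^(j+1)])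
        = (Finset.Ico (0:ℤ) (2*2^j)).filter
          (fun r => (2:ℤ)^j ∣ (c₁*r + (c₂/2)*(r*(r-1)) - b/2)) := by
      rw [hPm]
      apply Finset.filter_congr
      intro r _
      have h1 : c₂ = 2*(c₂/2) := by omega
      have h2 : b = 2*(b/2) := by omega
      have key : b - (2*(c₁*r) + c₂*(r*(r-1)))
          = 2*((b/2) - (c₁*r + (c₂/2)*(r*(r-1)))) := by
        linear_combination h2 - (r*(r-1)) * h1
      rw [Int.modEq_iff_dvd, key, mul_dvd_mul_iff_left (by norm_num : (2:ℤ) ≠ 0)]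
      exact dvd_sub_comm
    rw [hfil]
    exact evencase c₁ (c₂/2) (b/2) (2^j) hc₁ hd2 hm hcop
  · have hfil : (Finset.Ico (0:ℤ) (2^(j+1))).filter
        (fun r => 2*(c₁*r) + c₂*(r*(r-1)) ≡ b [ZMOD 2^(j+1)])
        = (Finset.Ico (0:ℤ) (2*2^j)).filter
          (fun r => 2*(2:ℤ)^j ∣ (2*(c₁*r) + c₂*(r*(r-1)) - b)) := by
      rw [hPm]
      apply Finset.filter_congr
      intro r _
      rw [Int.modEq_iff_dvd]
      exact dvd_sub_comm
    rw [hfil]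
    exact oddcase c₁ c₂ b (2^j) ho hb hm hcopP

private lemma count_bounds (P : ℤ) (hP : 0 < P) (v : ℤ) (N : ℕ) :
    ((2*(N:ℚ)+1))/P - 1 ≤ (((Finset.Icc (-(N:ℤ)) N).filter (fun n => n ≡ v [ZMOD P])).card : ℚ)
    ∧ (((Finset.Icc (-(N:ℤ)) N).filter (fun n => n ≡ v [ZMOD P])).card : ℚ)
        ≤ (2*(N:ℚ)+1)/P + 1 := by
  have hIcc : Finset.Icc (-(N:ℤ)) N = Finset.Ioc (-(N:ℤ)-1) N := by
    ext x; simp only [Finset.mem_Icc, Finset.mem_Ioc]; omega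
  have hcard := Int.Ioc_filter_modEq_card (-(N:ℤ)-1) N hP v
  rw [← hIcc] at hcard
  have hPQ : (0:ℚ) < (P:ℚ) := by exact_mod_cast hP
  have hc2 : (((Finset.Icc (-(N:ℤ)) N).filter (fun n => n ≡ v [ZMOD P])).card : ℚ)
      = (((⌊((N:ℚ) - v)/(P:ℚ)⌋ - ⌊((-(N:ℚ)-1) - v)/(P:ℚ)⌋) ⊔ 0 : ℤ) : ℚ) := by
    exact_mod_cast hcard
  set q1 : ℚ := ((N:ℚ) - v)/(P:ℚ) with hq1
  set q2 : ℚ := ((-(N:ℚ)-1) - v)/(P:ℚ) with hq2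
  have hfx1 : ((⌊q1⌋:ℚ)) ≤ q1 := Int.floor_le _
  have hfx2 : q1 < (⌊q1⌋:ℚ) + 1 := Int.lt_floor_add_one _
  have hfy1 : ((⌊q2⌋:ℚ)) ≤ q2 := Int.floor_le _
  have hfy2 : q2 < (⌊q2⌋:ℚ) + 1 := Int.lt_floor_add_one _
  have hkey : q1 - q2 = (2*(N:ℚ)+1)/P := by
    rw [hq1, hq2, div_sub_div_same]
    congr 1
    ring
  rw [hc2, Int.cast_max]
  constructor
  · refine le_trans ?_ (le_max_left _ _)
    push_cast
    linarith
  · apply max_le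
    · push_cast
      linarith
    · positivity

/-- For coprime integers `c₁, c₂` and `f(n) = c₁ n + c₂ n(n-1)/2`, the values `f(n)` are
uniformly distributed modulo every power of `2` if and only if `c₂ ≢ 2 (mod 4)`. -/
theorem stmt15 (c₁ c₂ : ℤ) (h : Int.gcd c₁ c₂ = 1) :
    (¬ c₂ ≡ 2 [ZMOD 4]) ↔
      ∀ j : ℕ, 1 ≤ j → ∀ a : ℤ,
        Filter.Tendsto
          (fun N : ℕ =>
            (Set.ncard {n : ℤ | -(N : ℤ) ≤ n ∧ n ≤ (N : ℤ) ∧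
              c₁ * n + c₂ * (n * (n - 1) / 2) ≡ a [ZMOD 2 ^ j]} : ℝ) / (2 * N + 1))
          Filter.atTop (nhds (1 / 2 ^ j)) := by
  constructor
  · intro hc₂ j hj a
    have hP : (0:ℤ) < 2^(j+1) := by positivity
    set T := (Finset.Ico (0:ℤ) (2^(j+1))).filter
      (fun r => 2*(c₁*r) + c₂*(r*(r-1)) ≡ 2*a [ZMOD 2^(j+1)]) with hT
    have hTcard : T.card = 2 := card_two c₁ c₂ h hc₂ j (2*a) (by omega)
    set cardN : ℕ → ℕ := fun N => ((Finset.Icc (-(N:ℤ)) N).filter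
      (fun n => c₁ * n + c₂ * (n * (n - 1) / 2) ≡ a [ZMOD 2 ^ j])).card with hcardN
    have hsetF : ∀ N : ℕ, (Set.ncard {n : ℤ | -(N : ℤ) ≤ n ∧ n ≤ (N : ℤ) ∧
        c₁ * n + c₂ * (n * (n - 1) / 2) ≡ a [ZMOD 2 ^ j]}) = cardN N := by
      intro N
      have : {n : ℤ | -(N : ℤ) ≤ n ∧ n ≤ (N : ℤ) ∧
          c₁ * n + c₂ * (n * (n - 1) / 2) ≡ a [ZMOD 2 ^ j]}
          = (((Finset.Icc (-(N:ℤ)) N).filter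
            (fun n => c₁ * n + c₂ * (n * (n - 1) / 2) ≡ a [ZMOD 2 ^ j])) : Set ℤ) := by
        ext n
        simp only [Set.mem_setOf_eq, Finset.coe_filter, Finset.mem_Icc, Set.mem_setOf_eq]
        tauto
      rw [this, Set.ncard_coe_finset]
    have hsum : ∀ N : ℕ, cardN N
        = ∑ r ∈ T, ((Finset.Icc (-(N:ℤ)) N).filter (fun n => n ≡ r [ZMOD 2^(j+1)])).card := by
      intro N
      show ((Finset.Icc (-(N:ℤ)) N).filter
        (fun n => c₁ * n + c₂ * (n * (n - 1) / 2) ≡ a [ZMOD 2 ^ j])).card = _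
      rw [Finset.card_eq_sum_card_fiberwise (f := fun n => n % 2^(j+1)) (t := T) ?_]
      · apply Finset.sum_congr rfl
        intro r hr
        simp only [hT, Finset.mem_filter, Finset.mem_Ico] at hr
        obtain ⟨⟨hr0, hrP⟩, hrcond⟩ := hr
        congr 1
        ext n
        simp only [Finset.mem_filter, Finset.mem_Icc]
        constructor
        · rintro ⟨⟨hn1, _⟩, hmod⟩
          exact ⟨hn1, show n % 2^(j+1) = r % 2^(j+1) by
            rw [hmod, Int.emod_eq_of_lt hr0 hrP]⟩
        · rintro ⟨hn1, hmod⟩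
          have hnr : n ≡ r [ZMOD 2^(j+1)] := hmod
          have hmod' : n % 2^(j+1) = r := by
            have h1 : n % 2^(j+1) = r % 2^(j+1) := hmod
            rw [h1, Int.emod_eq_of_lt hr0 hrP]
          refine ⟨⟨hn1, ?_⟩, hmod'⟩
          rw [mem_iff]
          exact (G_modEq hnr).trans hrcond
      · intro n hn
        simp only [Finset.mem_coe, Finset.mem_filter, Finset.mem_Icc] at hn
        obtain ⟨_, hcond⟩ := hn
        rw [mem_iff] at hcond
        simp only [hT, Finset.mem_coe, Finset.mem_filter, Finset.mem_Ico]
        refine ⟨⟨Int.emod_nonneg _ hP.ne', Int.emod_lt_of_pos _ hP⟩, ?_⟩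
        have hme : (n % 2^(j+1)) ≡ n [ZMOD 2^(j+1)] := Int.emod_emod_of_dvd n dvd_rfl
        exact (G_modEq hme).trans hcond
    have hbounds : ∀ N : ℕ,
        2*((2*(N:ℚ)+1)/(((2:ℤ)^(j+1) : ℤ):ℚ) - 1) ≤ (cardN N : ℚ)
        ∧ (cardN N : ℚ) ≤ 2*((2*(N:ℚ)+1)/(((2:ℤ)^(j+1) : ℤ):ℚ) + 1) := by
      intro N
      have hcast : (cardN N : ℚ) = ∑ r ∈ T,
          (((Finset.Icc (-(N:ℤ)) N).filter (fun n => n ≡ r [ZMOD 2^(j+1)])).card : ℚ) := by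
        rw [hsum N]
        push_cast
        rfl
      constructor
      · have hlow := Finset.sum_le_sum
          (fun r (_ : r ∈ T) => (count_bounds (2^(j+1)) hP r N).1)
        rw [Finset.sum_const, hTcard] at hlow
        rw [hcast]
        calc 2*((2*(N:ℚ)+1)/(((2:ℤ)^(j+1) : ℤ):ℚ) - 1)
            = (2:ℕ) • ((2*(N:ℚ)+1)/(((2:ℤ)^(j+1) : ℤ):ℚ) - 1) := by
              rw [nsmul_eq_mul]; push_cast; ring
          _ ≤ _ := hlow
      · have hhigh := Finset.sum_le_sum
          (fun r (_ : r ∈ T) => (count_bounds (2^(j+1)) hP r N).2)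
        rw [Finset.sum_const, hTcard] at hhigh
        rw [hcast]
        calc ∑ r ∈ T, (((Finset.Icc (-(N:ℤ)) N).filter
              (fun n => n ≡ r [ZMOD 2^(j+1)])).card : ℚ)
            ≤ (2:ℕ) • ((2*(N:ℚ)+1)/(((2:ℤ)^(j+1) : ℤ):ℚ) + 1) := hhigh
          _ = 2*((2*(N:ℚ)+1)/(((2:ℤ)^(j+1) : ℤ):ℚ) + 1) := by
              rw [nsmul_eq_mul]; push_cast; ring
    -- now transfer to ℝ and squeeze
    have hposN : ∀ N : ℕ, (0:ℝ) < 2*(N:ℝ)+1 := fun N => by positivity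
    have hpow : ((2:ℝ)^(j+1)) ≠ 0 := by positivity
    have hlo : ∀ N : ℕ, 2/((2:ℝ)^(j+1)) - 2/(2*(N:ℝ)+1) ≤ (cardN N : ℝ)/(2*(N:ℝ)+1) := by
      intro N
      have hQ := (hbounds N).1
      have hR : 2*((2*(N:ℝ)+1)/((2:ℝ)^(j+1)) - 1) ≤ (cardN N : ℝ) := by
        have hc := (Rat.cast_le (K := ℝ)).mpr hQ
        push_cast at hc
        convert hc using 2 <;> push_cast <;> ring
      rw [le_div_iff₀ (hposN N)]
      have heq : (2/((2:ℝ)^(j+1)) - 2/(2*(N:ℝ)+1)) * (2*(N:ℝ)+1)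
          = 2*((2*(N:ℝ)+1)/((2:ℝ)^(j+1)) - 1) := by
        field_simp
      rw [heq]; exact hR
    have hhi : ∀ N : ℕ, (cardN N : ℝ)/(2*(N:ℝ)+1) ≤ 2/((2:ℝ)^(j+1)) + 2/(2*(N:ℝ)+1) := by
      intro N
      have hQ := (hbounds N).2
      have hR : (cardN N : ℝ) ≤ 2*((2*(N:ℝ)+1)/((2:ℝ)^(j+1)) + 1) := by
        have hc := (Rat.cast_le (K := ℝ)).mpr hQ
        push_cast at hc
        convert hc using 2 <;> push_cast <;> ring
      rw [div_le_iff₀ (hposN N)]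
      have heq : (2/((2:ℝ)^(j+1)) + 2/(2*(N:ℝ)+1)) * (2*(N:ℝ)+1)
          = 2*((2*(N:ℝ)+1)/((2:ℝ)^(j+1)) + 1) := by
        field_simp
      rw [heq]; exact hR
    have htop : Filter.Tendsto (fun N : ℕ => 2*(N:ℝ)+1) Filter.atTop Filter.atTop := by
      apply Filter.tendsto_atTop_add_const_right
      exact Filter.Tendsto.const_mul_atTop two_pos tendsto_natCast_atTop_atTop
    have h0 : Filter.Tendsto (fun N : ℕ => 2/(2*(N:ℝ)+1)) Filter.atTop (nhds 0) :=
      Filter.Tendsto.div_atTop tendsto_const_nhds htop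
    have hval : (1:ℝ)/2^j = 2/((2:ℝ)^(j+1)) := by
      rw [pow_succ]
      field_simp
    have hloT : Filter.Tendsto (fun N : ℕ => 2/((2:ℝ)^(j+1)) - 2/(2*(N:ℝ)+1))
        Filter.atTop (nhds (1/2^j)) := by
      have := Filter.Tendsto.sub (tendsto_const_nhds :
        Filter.Tendsto (fun _ : ℕ => 2/((2:ℝ)^(j+1))) Filter.atTop
          (nhds (2/((2:ℝ)^(j+1))))) h0
      rw [sub_zero] at this
      rw [hval]
      exact this
    have hhiT : Filter.Tendsto (fun N : ℕ => 2/((2:ℝ)^(j+1)) + 2/(2*(N:ℝ)+1))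
        Filter.atTop (nhds (1/2^j)) := by
      have := Filter.Tendsto.add (tendsto_const_nhds :
        Filter.Tendsto (fun _ : ℕ => 2/((2:ℝ)^(j+1))) Filter.atTop
          (nhds (2/((2:ℝ)^(j+1))))) h0
      rw [add_zero] at this
      rw [hval]
      exact this
    have := tendsto_of_tendsto_of_tendsto_of_le_of_le hloT hhiT hlo hhi
    apply Filter.Tendsto.congr (f₁ := fun N : ℕ => (cardN N : ℝ)/(2*(N:ℝ)+1))
    · intro N
      rw [hsetF N]
    · exact this
  · intro H hc2
    have hc2' : c₂ % 4 = 2 % 4 := hc2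
    have hc₁ : c₁ % 2 = 1 := c1_odd h (by omega)
    have hempty : ∀ n : ℤ, ¬ (c₁ * n + c₂ * (n * (n - 1) / 2) ≡ 2 [ZMOD 2 ^ 2]) := by
      intro n hn
      rw [mem_iff] at hn
      have h8 : ((2*(c₁*n) + c₂*(n*(n-1)) - 2*2 : ℤ) : ZMod 8) = 0 := by
        rw [ZMod.intCast_zmod_eq_zero_iff_dvd]
        have hd := Int.ModEq.dvd hn
        have he8 : ((8:ℕ):ℤ) = 2^(2+1) := by norm_num
        rw [he8]
        obtain ⟨k, hk⟩ := hd
        exact ⟨-k, by linear_combination -hk⟩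
      obtain ⟨t, ht⟩ : ∃ t, c₁ = 2*t+1 := ⟨c₁/2, by omega⟩
      obtain ⟨k, hk⟩ : ∃ k, c₂ = 4*k+2 := ⟨c₂/4, by omega⟩
      rw [ht, hk] at h8
      push_cast at h8
      revert h8
      generalize ((t:ℤ) : ZMod 8) = T
      generalize ((k:ℤ) : ZMod 8) = K
      generalize ((n:ℤ) : ZMod 8) = X
      revert T K X
      decide
    have hzero : ∀ N : ℕ, {n : ℤ | -(N : ℤ) ≤ n ∧ n ≤ (N : ℤ) ∧
        c₁ * n + c₂ * (n * (n - 1) / 2) ≡ 2 [ZMOD 2 ^ 2]} = ∅ := by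
      intro N
      ext n
      simp only [Set.mem_setOf_eq, Set.mem_empty_iff_false, iff_false, not_and]
      intro _ _
      exact hempty n
    have hH := H 2 (by norm_num) 2
    have h0 : Filter.Tendsto (fun N : ℕ =>
        (Set.ncard {n : ℤ | -(N : ℤ) ≤ n ∧ n ≤ (N : ℤ) ∧
          c₁ * n + c₂ * (n * (n - 1) / 2) ≡ 2 [ZMOD 2 ^ 2]} : ℝ) / (2 * N + 1))
        Filter.atTop (nhds 0) := by
      apply Filter.Tendsto.congr (f₁ := fun _ : ℕ => (0:ℝ))
      · intro N
        rw [hzero N, Set.ncard_empty]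
        simp
      · exact tendsto_const_nhds
    have huniq := tendsto_nhds_unique hH h0
    norm_num at huniq
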